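/- Let ε > 0, let f : [-1,1] → ℝ be continuously differentiable, and let φ : [-1,1] → ℝ be twice continuously differentiable with φ(−1) = φ(1) = 0 and −ε φ″(x) + φ(x) = f′(x) for all x∈[-1,1]. Then for every x∈[-1,1]: φ′(x) = (1/(2ε)) ∫_{-1}^1 ( ∫_y^x φ(z) dz ) dy − (1/ε) f(x) + (1/(2ε)) ∫_{-1}^1 f(y) dy. -/

import Mathlib

open Set MeasureTheory

theorem phi_deriv_representation (ε : ℝ) (hε : 0 < ε) (f φ : ℝ → ℝ)
    (hf : ContDiff ℝ 1 f) (hφ : ContDiff ℝ 2 φ)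
    (hbc : φ (-1) = 0 ∧ φ 1 = 0)
    (heq : ∀ x ∈ Set.Icc (-1:ℝ) 1, -ε * deriv (deriv φ) x + φ x = deriv f x) :
    ∀ x ∈ Set.Icc (-1:ℝ) 1,
      deriv φ x = (1 / (2 * ε)) * (∫ y in (-1:ℝ)..1, ∫ z in y..x, φ z)
        - (1 / ε) * f x + (1 / (2 * ε)) * ∫ y in (-1:ℝ)..1, f y := by
  obtain ⟨hb1, hb2⟩ := hbc
  intro x hx
  have hφ1 : ContDiff ℝ 1 (deriv φ) := by
    have := (contDiff_succ_iff_deriv (n := 1)).mp (by exact_mod_cast hφ)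
    exact this.2.2
  have hφc : Continuous φ := hφ.continuous
  have hφ'c : Continuous (deriv φ) := hφ1.continuous
  have hφ''c : Continuous (deriv (deriv φ)) := hφ1.continuous_deriv le_rfl
  have hfc : Continuous f := hf.continuous
  have hf'c : Continuous (deriv f) := hf.continuous_deriv le_rfl
  -- FTC facts
  have hFTCφ : ∀ y : ℝ, (∫ z in y..x, deriv (deriv φ) z) = deriv φ x - deriv φ y := by
    intro y
    exact intervalIntegral.integral_deriv_eq_sub
      (fun z _ => (hφ1.differentiable one_ne_zero) z) (hφ''c.intervalIntegrable _ _)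
  have hFTCf : ∀ y : ℝ, (∫ z in y..x, deriv f z) = f x - f y := by
    intro y
    exact intervalIntegral.integral_deriv_eq_sub
      (fun z _ => (hf.differentiable one_ne_zero) z) (hf'c.intervalIntegrable _ _)
  -- key pointwise identity
  have key : ∀ y ∈ Set.Icc (-1:ℝ) 1,
      ε * deriv φ x - ε * deriv φ y = (∫ z in y..x, φ z) - f x + f y := by
    intro y hy
    have hsub : Set.uIcc y x ⊆ Set.Icc (-1:ℝ) 1 := Set.uIcc_subset_Icc hy hx
    have h1 : (∫ z in y..x, ε * deriv (deriv φ) z) = ∫ z in y..x, (φ z - deriv f z) := by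
      apply intervalIntegral.integral_congr
      intro z hz
      have := heq z (hsub hz)
      simp only []
      linarith
    have h2 : (∫ z in y..x, ε * deriv (deriv φ) z) = ε * ∫ z in y..x, deriv (deriv φ) z :=
      intervalIntegral.integral_const_mul _ _
    have h3 : (∫ z in y..x, (φ z - deriv f z)) = (∫ z in y..x, φ z) - ∫ z in y..x, deriv f z :=
      intervalIntegral.integral_sub (hφc.intervalIntegrable _ _) (hf'c.intervalIntegrable _ _)
    rw [h2, hFTCφ y] at h1
    rw [h3, hFTCf y] at h1
    linarith
  -- the map y ↦ ∫ z in y..x, φ z is continuous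
  have hprim : Continuous fun y : ℝ => ∫ z in (-1:ℝ)..y, φ z :=
    intervalIntegral.continuous_primitive (fun a b => hφc.intervalIntegrable a b) _
  have hgrep : ∀ y : ℝ, (∫ z in y..x, φ z)
      = (∫ z in (-1:ℝ)..x, φ z) - ∫ z in (-1:ℝ)..y, φ z := by
    intro y
    rw [intervalIntegral.integral_interval_sub_left (hφc.intervalIntegrable _ _)
      (hφc.intervalIntegrable _ _)]
  have hgc : Continuous fun y : ℝ => ∫ z in y..x, φ z := by
    have : (fun y : ℝ => ∫ z in y..x, φ z)
        = fun y => (∫ z in (-1:ℝ)..x, φ z) - ∫ z in (-1:ℝ)..y, φ z := funext hgrep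
    rw [this]
    exact continuous_const.sub hprim
  -- integrate key over y in [-1,1]
  have hji : (∫ y in (-1:ℝ)..1, (ε * deriv φ x - ε * deriv φ y))
      = ∫ y in (-1:ℝ)..1, ((∫ z in y..x, φ z) - f x + f y) := by
    apply intervalIntegral.integral_congr
    intro y hy
    have : y ∈ Set.Icc (-1:ℝ) 1 := by
      rwa [Set.uIcc_of_le (by norm_num : (-1:ℝ) ≤ 1)] at hy
    exact key y this
  have hL : (∫ y in (-1:ℝ)..1, (ε * deriv φ x - ε * deriv φ y)) = 2 * (ε * deriv φ x) := by
    rw [intervalIntegral.integral_sub (f := fun _ => ε * deriv φ x) (g := fun y => ε * deriv φ y) intervalIntegrable_const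
      ((continuous_const.mul hφ'c).intervalIntegrable _ _)]
    rw [intervalIntegral.integral_const]
    have : (∫ y in (-1:ℝ)..1, ε * deriv φ y) = ε * ∫ y in (-1:ℝ)..1, deriv φ y :=
      intervalIntegral.integral_const_mul _ _
    rw [this, intervalIntegral.integral_deriv_eq_sub
      (fun z _ => (hφ.differentiable (by norm_num)) z) (hφ'c.intervalIntegrable _ _),
      hb1, hb2]
    simp only [smul_eq_mul]
    ring
  have hR : (∫ y in (-1:ℝ)..1, ((∫ z in y..x, φ z) - f x + f y))
      = (∫ y in (-1:ℝ)..1, ∫ z in y..x, φ z) - 2 * f x + ∫ y in (-1:ℝ)..1, f y := by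
    rw [intervalIntegral.integral_add (f := fun y => (∫ z in y..x, φ z) - f x) (g := f) (((hgc.sub continuous_const).intervalIntegrable _ _))
      (hfc.intervalIntegrable _ _),
      intervalIntegral.integral_sub (hgc.intervalIntegrable _ _) intervalIntegrable_const,
      intervalIntegral.integral_const]
    simp only [smul_eq_mul]
    ring
  rw [hL, hR] at hji
  have hε' : ε ≠ 0 := ne_of_gt hε
  calc deriv φ x = (2 * (ε * deriv φ x)) / (2 * ε) := by field_simp
    _ = ((∫ y in (-1:ℝ)..1, ∫ z in y..x, φ z) - 2 * f x + ∫ y in (-1:ℝ)..1, f y) / (2 * ε) := by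
        rw [hji]
    _ = (1 / (2 * ε)) * (∫ y in (-1:ℝ)..1, ∫ z in y..x, φ z)
        - (1 / ε) * f x + (1 / (2 * ε)) * ∫ y in (-1:ℝ)..1, f y := by
        field_simp
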